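/- Let ε ∈ (0,1), δ ∈ (0,1), Δ > 0, and let σ > √(2 ln(1.25/δ)) · Δ/ε. Then for all real numbers a, b with |a − b| ≤ Δ and every Borel measurable set S ⊆ ℝ, N(a, σ²)(S) ≤ e^ε · N(b, σ²)(S) + δ, where N(m, σ²) denotes the Gaussian probability measure on ℝ with mean m and variance σ². -/

import Mathlib

open MeasureTheory ProbabilityTheory Real
open scoped NNReal ENNReal

lemma gauss_neg (v : ℝ≥0) : (gaussianReal 0 v).map (fun x : ℝ => -x) = gaussianReal 0 v := by
  have h := gaussianReal_map_const_mul (μ := 0) (v := v) (-1)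
  simp only [neg_one_mul, mul_zero] at h
  convert h using 2
  ext
  norm_num

lemma gauss_Iio (v : ℝ≥0) (u : ℝ) :
    gaussianReal 0 v (Set.Iio u) = gaussianReal 0 v (Set.Ioi (-u)) := by
  conv_lhs => rw [← gauss_neg v]
  rw [Measure.map_apply measurable_neg measurableSet_Iio]
  congr 1
  ext x
  simp [lt_neg]

lemma gauss_sing (v : ℝ≥0) (hv : v ≠ 0) (x : ℝ) : gaussianReal 0 v {x} = 0 :=
  gaussianReal_absolutelyContinuous 0 hv (Real.volume_singleton)

lemma gauss_Ioi_zero (v : ℝ≥0) (hv : v ≠ 0) : gaussianReal 0 v (Set.Ioi (0:ℝ)) = 1/2 := by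
  have h1 : gaussianReal 0 v (Set.Iio (0:ℝ)) = gaussianReal 0 v (Set.Ioi (0:ℝ)) := by
    simpa using gauss_Iio v 0
  have h0 : gaussianReal 0 v ({0} : Set ℝ) = 0 := gauss_sing v hv 0
  have hu : gaussianReal 0 v (Set.Iio (0:ℝ)) + gaussianReal 0 v (Set.Ici (0:ℝ)) = 1 := by
    have := measure_add_measure_compl (μ := gaussianReal 0 v) (measurableSet_Iio (a := (0:ℝ)))
    simpa using this
  have hIci : gaussianReal 0 v (Set.Ici (0:ℝ)) = gaussianReal 0 v (Set.Ioi (0:ℝ)) := by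
    refine le_antisymm ?_ (measure_mono Set.Ioi_subset_Ici_self)
    rw [← Set.Ioi_union_left]
    calc gaussianReal 0 v (Set.Ioi 0 ∪ {0}) ≤ gaussianReal 0 v (Set.Ioi 0) + gaussianReal 0 v {0} :=
          measure_union_le _ _
      _ = gaussianReal 0 v (Set.Ioi 0) := by rw [h0, add_zero]
  rw [h1, hIci] at hu
  rw [ENNReal.eq_div_iff (by norm_num) (by norm_num), ← hu, two_mul]

lemma gauss_shift (v : ℝ≥0) (a : ℝ) (B : Set ℝ) (hB : MeasurableSet B) :
    gaussianReal a v B = gaussianReal 0 v {x | x + a ∈ B} := by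
  have h := gaussianReal_map_add_const (μ := 0) (v := v) a
  rw [zero_add] at h
  rw [← h, Measure.map_apply (by fun_prop) hB]
  rfl

lemma gauss_Ioi_mean (v : ℝ≥0) (hv : v ≠ 0) (m : ℝ) :
    gaussianReal m v (Set.Ioi m) = 1/2 := by
  rw [gauss_shift v m _ measurableSet_Ioi, ← gauss_Ioi_zero v hv]
  congr 1
  ext x
  simp

lemma var_ne (σ : ℝ) (hσ : 0 < σ) : (σ^2).toNNReal ≠ 0 := by
  simp [Real.toNNReal_eq_zero, not_le]; positivity

lemma var_coe (σ : ℝ) (hσ : 0 < σ) : (((σ^2).toNNReal : ℝ≥0) : ℝ) = σ^2 :=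
  Real.coe_toNNReal _ (sq_nonneg σ)

lemma gauss_integral_Ioi_mean (σ : ℝ) (hσ : 0 < σ) (m : ℝ) :
    ∫ x in Set.Ioi m, gaussianPDFReal m ((σ^2).toNNReal) x = 1/2 := by
  have h := gauss_Ioi_mean ((σ^2).toNNReal) (var_ne σ hσ) m
  rw [gaussianReal_apply_eq_integral _ (var_ne σ hσ)] at h
  have := congrArg ENNReal.toReal h
  rwa [ENNReal.toReal_ofReal
    (integral_nonneg fun x => gaussianPDFReal_nonneg _ _ _), ENNReal.toReal_div,
    ENNReal.toReal_one, ENNReal.toReal_ofNat] at this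

lemma gauss_tail (σ : ℝ) (hσ : 0 < σ) (T : ℝ) (hT : 0 ≤ T) :
    ((gaussianReal 0 ((σ^2).toNNReal)) (Set.Ioi T)).toReal
      ≤ (1/2) * Real.exp (-(T^2)/(2*σ^2)) := by
  set v := (σ^2).toNNReal with hvdef
  have hv := var_ne σ hσ
  have hvc := var_coe σ hσ
  rw [gaussianReal_apply_eq_integral _ hv,
    ENNReal.toReal_ofReal (integral_nonneg fun x => gaussianPDFReal_nonneg _ _ _)]
  have key : ∀ x ∈ Set.Ioi T,
      gaussianPDFReal 0 v x ≤ Real.exp (-(T^2)/(2*σ^2)) * gaussianPDFReal T v x := by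
    intro x hx
    simp only [Set.mem_Ioi] at hx
    unfold gaussianPDFReal
    rw [hvc, sub_zero]
    have hexp : Real.exp (-x^2/(2*σ^2))
        ≤ Real.exp (-(T^2)/(2*σ^2)) * Real.exp (-((x-T)^2)/(2*σ^2)) := by
      rw [← Real.exp_add]
      refine Real.exp_le_exp.mpr ?_
      rw [← add_div, div_le_div_iff₀ (by positivity) (by positivity)]
      nlinarith [mul_nonneg hT (le_of_lt (sub_pos.mpr hx))]
    refine le_trans (mul_le_mul_of_nonneg_left hexp (by positivity)) (le_of_eq (by ring))
  calc ∫ x in Set.Ioi T, gaussianPDFReal 0 v x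
      ≤ ∫ x in Set.Ioi T, Real.exp (-(T^2)/(2*σ^2)) * gaussianPDFReal T v x :=
        setIntegral_mono_on (integrable_gaussianPDFReal 0 v).integrableOn
          ((integrable_gaussianPDFReal T v).integrableOn.const_mul _) measurableSet_Ioi key
    _ = Real.exp (-(T^2)/(2*σ^2)) * ∫ x in Set.Ioi T, gaussianPDFReal T v x := by
        rw [integral_const_mul]
    _ = (1/2) * Real.exp (-(T^2)/(2*σ^2)) := by
        rw [gauss_integral_Ioi_mean σ hσ T, mul_comm]



lemma half_toReal : ((1:ℝ≥0∞)/2).toReal = 1/2 := by simp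

lemma exp_half_le : Real.exp (1/2) ≤ 1.7 := by
  have h2 : Real.exp (1/2) * Real.exp (1/2) = Real.exp 1 := by
    rw [← Real.exp_add]; norm_num
  nlinarith [Real.exp_one_lt_d9, Real.exp_pos (1/2)]

lemma exp_quarter_le : Real.exp (1/4) ≤ 4/3 := by
  have h2 : Real.exp (1/4) * Real.exp (1/4) = Real.exp (1/2) := by
    rw [← Real.exp_add]; norm_num
  nlinarith [exp_half_le, Real.exp_pos (1/4)]

lemma log_oneQ (δ : ℝ) (hδ0 : 0 < δ) (hδ1 : δ < 1) : 0.2 < Real.log (1.25/δ) := by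
  have h1 : Real.log (1.25/δ) = Real.log 1.25 - Real.log δ :=
    Real.log_div (by norm_num) (ne_of_gt hδ0)
  have h2 : Real.log δ < 0 := Real.log_neg hδ0 hδ1
  have h3 : Real.log (0.8 : ℝ) ≤ 0.8 - 1 := Real.log_le_sub_one_of_pos (by norm_num)
  have h4 : Real.log (1.25 : ℝ) = - Real.log 0.8 := by
    rw [show (1.25:ℝ) = 0.8⁻¹ by norm_num, Real.log_inv]
  nlinarith

set_option maxHeartbeats 1000000 in
lemma tail_le_delta (ε δ Δ σ : ℝ)
    (hε0 : 0 < ε) (hε1 : ε < 1) (hδ0 : 0 < δ) (hδ1 : δ < 1) (hΔ : 0 < Δ)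
    (hσ : σ > Real.sqrt (2 * Real.log (1.25 / δ)) * Δ / ε) :
    ((gaussianReal 0 ((σ^2).toNNReal)) (Set.Ioi (σ^2*ε/Δ - Δ/2))).toReal ≤ δ := by
  have hlog := log_oneQ δ hδ0 hδ1
  set c := Real.sqrt (2 * Real.log (1.25/δ)) with hcdef
  have hc : 0 < c := Real.sqrt_pos.mpr (by linarith)
  have hcsq : c^2 = 2 * Real.log (1.25/δ) := Real.sq_sqrt (by linarith)
  have hσc : c * Δ < σ * ε := by
    rw [gt_iff_lt, div_lt_iff₀ hε0] at hσ; linarith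
  have hσ0 : 0 < σ := by nlinarith
  set T := σ^2*ε/Δ - Δ/2 with hTdef
  -- 2cT > 2σc² - σ
  have hT1 : 2*σ*c^2 - σ < 2*c*T := by
    have e1 : σ * c < σ^2*ε/Δ := by
      rw [lt_div_iff₀ hΔ]; nlinarith
    have e2 : Δ * c < σ := by nlinarith
    have e2' : Δ/2 < σ/(2*c) := by
      rw [div_lt_div_iff₀ (by norm_num) (by positivity)]; nlinarith
    have e3 : σ*c - σ/(2*c) < T := by
      simp only [hTdef]; linarith
    have e4 := (mul_lt_mul_iff_right₀ (show (0:ℝ) < 2*c by positivity)).mpr e3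
    have e5 : 2*c*(σ*c - σ/(2*c)) = 2*σ*c^2 - σ := by
      field_simp
    rw [← e5]; exact e4
  clear_value T c
  clear hcdef hTdef hσ
  have hlog2 : c^2/2 = Real.log (1.25/δ) := by linarith
  by_cases h2c : 1 ≤ 2*c^2
  · -- case A
    have hT0 : 0 ≤ T := by nlinarith
    have htail := gauss_tail σ hσ0 T hT0
    have hTsq : σ^2*(c^2 - 1) ≤ T^2 := by
      have h1 : (2*σ*c^2 - σ)^2 ≤ (2*c*T)^2 := by
        have h0 : 0 ≤ 2*σ*c^2 - σ := by nlinarith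
        nlinarith
      nlinarith [sq_nonneg σ, sq_nonneg c, mul_pos hc hc]
    have hexparg : -(T^2)/(2*σ^2) ≤ (1 - c^2)/2 := by
      rw [div_le_div_iff₀ (by positivity) (by norm_num)]
      nlinarith
    have hexp2 : Real.exp ((1 - c^2)/2) = Real.exp (1/2) * (δ/1.25) := by
      rw [show (1-c^2)/2 = 1/2 + -(c^2/2) by ring, Real.exp_add, hlog2]
      congr 1
      rw [Real.exp_neg, Real.exp_log (by positivity), inv_div]
    have hexp3 : Real.exp (-(T^2)/(2*σ^2)) ≤ Real.exp (1/2) * (δ/1.25) := by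
      rw [← hexp2]; exact Real.exp_le_exp.mpr hexparg
    have s1 : ((gaussianReal 0 ((σ^2).toNNReal)) (Set.Ioi T)).toReal
        ≤ 1/2 * (Real.exp (1/2) * (δ/1.25)) :=
      le_trans htail (mul_le_mul_of_nonneg_left hexp3 (by norm_num))
    have s2 : Real.exp (1/2) * (δ/1.25) ≤ 1.7 * (δ/1.25) :=
      mul_le_mul_of_nonneg_right exp_half_le (by positivity)
    have s3 : 1/2 * (1.7 * (δ/1.25)) = 0.68 * δ := by ring
    nlinarith [s1, s2, s3, hδ0.le]
  · -- case B
    push_neg at h2c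
    have hδbig : 0.9375 < δ := by
      have h1 : Real.log (1.25/δ) < 1/4 := by nlinarith
      have h2 : (1.25:ℝ)/δ < Real.exp (1/4) := by
        calc (1.25:ℝ)/δ = Real.exp (Real.log (1.25/δ)) :=
              (Real.exp_log (by positivity)).symm
          _ < Real.exp (1/4) := Real.exp_lt_exp.mpr h1
      have h3 := exp_quarter_le
      rw [div_lt_iff₀ hδ0] at h2
      nlinarith
    by_cases hT0 : 0 ≤ T
    · have hmono : (gaussianReal 0 ((σ^2).toNNReal)) (Set.Ioi T)
          ≤ (gaussianReal 0 ((σ^2).toNNReal)) (Set.Ioi (0:ℝ)) :=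
        measure_mono (Set.Ioi_subset_Ioi hT0)
      have h5 := ENNReal.toReal_mono (measure_ne_top _ _) hmono
      rw [gauss_Ioi_zero _ (var_ne σ hσ0), half_toReal] at h5
      linarith
    · push_neg at hT0
      have hv := var_ne σ hσ0
      have hvc := var_coe σ hσ0
      have hrw : ((gaussianReal 0 ((σ^2).toNNReal)) (Set.Ioi T)).toReal
          = ∫ x in Set.Ioi T, gaussianPDFReal 0 ((σ^2).toNNReal) x := by
        rw [gaussianReal_apply_eq_integral _ hv,
          ENNReal.toReal_ofReal (integral_nonneg fun x => gaussianPDFReal_nonneg _ _ _)]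
      rw [hrw]
      have hunion : Set.Ioc T (0:ℝ) ∪ Set.Ioi (0:ℝ) = Set.Ioi T :=
        Set.Ioc_union_Ioi_eq_Ioi hT0.le
      have hdisj : Disjoint (Set.Ioc T (0:ℝ)) (Set.Ioi (0:ℝ)) :=
        Set.Ioc_disjoint_Ioi le_rfl
      rw [← hunion, setIntegral_union hdisj measurableSet_Ioi
        (integrable_gaussianPDFReal 0 _).integrableOn
        (integrable_gaussianPDFReal 0 _).integrableOn]
      have hIoi : ∫ x in Set.Ioi (0:ℝ), gaussianPDFReal 0 ((σ^2).toNNReal) x = 1/2 :=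
        gauss_integral_Ioi_mean σ hσ0 0
      have hbound : ∫ x in Set.Ioc T (0:ℝ), gaussianPDFReal 0 ((σ^2).toNNReal) x
          ≤ (-T) * (σ * 2.5)⁻¹ := by
        have hple : ∀ x ∈ Set.Ioc T (0:ℝ),
            gaussianPDFReal 0 ((σ^2).toNNReal) x ≤ (σ * 2.5)⁻¹ := by
          intro x hx
          unfold gaussianPDFReal
          rw [hvc]
          have h1 : Real.exp (-(x-0)^2/(2*σ^2)) ≤ 1 := by
            rw [Real.exp_le_one_iff]
            apply div_nonpos_of_nonpos_of_nonneg
            · nlinarith [sq_nonneg (x-0)]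
            · positivity
          have h2 : (σ * 2.5) ≤ Real.sqrt (2*π*σ^2) := by
            rw [show 2*π*σ^2 = (2*π)*σ^2 by ring, Real.sqrt_mul (by positivity),
              Real.sqrt_sq hσ0.le]
            have h25 : (2.5:ℝ) ≤ Real.sqrt (2*π) := by
              rw [show (2.5:ℝ) = Real.sqrt (2.5^2) by rw [Real.sqrt_sq]; norm_num]
              apply Real.sqrt_le_sqrt
              nlinarith [Real.pi_gt_d6]
            nlinarith [mul_le_mul_of_nonneg_right h25 hσ0.le]
          calc (Real.sqrt (2*π*σ^2))⁻¹ * Real.exp (-(x-0)^2/(2*σ^2))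
              ≤ (Real.sqrt (2*π*σ^2))⁻¹ * 1 :=
                mul_le_mul_of_nonneg_left h1 (by positivity)
            _ = (Real.sqrt (2*π*σ^2))⁻¹ := mul_one _
            _ ≤ (σ * 2.5)⁻¹ := inv_anti₀ (by positivity) h2
        calc ∫ x in Set.Ioc T (0:ℝ), gaussianPDFReal 0 ((σ^2).toNNReal) x
            ≤ ∫ _x in Set.Ioc T (0:ℝ), (σ * 2.5)⁻¹ :=
              setIntegral_mono_on (integrable_gaussianPDFReal 0 _).integrableOn
                ((integrableOn_const_iff (C := (σ * 2.5)⁻¹)).mpr (Or.inr (by rw [Real.volume_Ioc]; exact ENNReal.ofReal_lt_top)))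
                measurableSet_Ioc hple
          _ = (-T) * (σ * 2.5)⁻¹ := by
              rw [setIntegral_const, Real.volume_real_Ioc, smul_eq_mul,
                max_eq_left (by linarith)]
              ring_nf
      have hc632 : 0.632 ≤ c := by nlinarith
      have hfinal : (-T) * (σ * 2.5)⁻¹ ≤ 0.064 := by
        -- from hT1 : 2σc² - σ < 2cT, so -T < σ(1 - 2c²)/(2c)
        have h1 : -T * (2*c) < σ * (1 - 2*c^2) := by nlinarith
        have h2 : σ * (1 - 2*c^2) ≤ σ * (2*c) * 0.16 := by
          have : (1 - 2*c^2) ≤ (2*c) * 0.16 := by nlinarith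
          nlinarith
        have h3 : -T < σ * 0.16 := by
          have hcc : (0:ℝ) < 2*c := by positivity
          nlinarith
        have h4 : (σ * 2.5)⁻¹ = σ⁻¹ * 0.4 := by
          rw [mul_inv]; norm_num
        rw [h4]
        have h5 : -T * (σ⁻¹ * 0.4) ≤ (σ * 0.16) * (σ⁻¹ * 0.4) := by
          apply mul_le_mul_of_nonneg_right h3.le (by positivity)
        have h6 : (σ * 0.16) * (σ⁻¹ * 0.4) = 0.064 := by
          field_simp; ring
        linarith
      linarith [hbound, hIoi, hfinal]



set_option maxHeartbeats 1000000 in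
/-- The Gaussian mechanism: for ε ∈ (0,1), δ ∈ (0,1), sensitivity Δ > 0 and
σ > √(2 ln(1.25/δ)) · Δ/ε, for all means a, b with |a − b| ≤ Δ and every Borel set S,
N(a,σ²)(S) ≤ e^ε · N(b,σ²)(S) + δ. -/
theorem gaussian_mechanism_dp (ε δ Δ σ : ℝ)
    (hε : ε ∈ Set.Ioo (0 : ℝ) 1) (hδ : δ ∈ Set.Ioo (0 : ℝ) 1) (hΔ : 0 < Δ)
    (hσ : σ > Real.sqrt (2 * Real.log (1.25 / δ)) * Δ / ε) :
    ∀ a b : ℝ, |a - b| ≤ Δ → ∀ S : Set ℝ, MeasurableSet S →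
      ((gaussianReal a (Real.toNNReal (σ ^ 2))) S).toReal
        ≤ Real.exp ε * ((gaussianReal b (Real.toNNReal (σ ^ 2))) S).toReal + δ := by
  obtain ⟨hε0, hε1⟩ := hε
  obtain ⟨hδ0, hδ1⟩ := hδ
  have hlogpos : 0 < Real.log (1.25/δ) :=
    Real.log_pos (by rw [lt_div_iff₀ hδ0]; linarith)
  have hσ0 : 0 < σ := by
    refine lt_of_le_of_lt ?_ hσ
    positivity
  have hv := var_ne σ hσ0
  have hvc := var_coe σ hσ0
  intro a b hab S hS
  set d := a - b with hd
  set B := {x : ℝ | Real.exp ε * gaussianPDFReal b ((σ^2).toNNReal) x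
      < gaussianPDFReal a ((σ^2).toNNReal) x} with hBdef
  have hBmeas : MeasurableSet B :=
    measurableSet_lt ((measurable_gaussianPDFReal b _).const_mul _)
      (measurable_gaussianPDFReal a _)
  -- rewrite the three measures as integrals
  have htoReal : ∀ (m : ℝ) (E : Set ℝ), ((gaussianReal m ((σ^2).toNNReal)) E).toReal
      = ∫ x in E, gaussianPDFReal m ((σ^2).toNNReal) x := by
    intro m E
    rw [gaussianReal_apply_eq_integral _ hv,
      ENNReal.toReal_ofReal (integral_nonneg fun x => gaussianPDFReal_nonneg _ _ _)]
  rw [htoReal, htoReal]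
  -- split S
  have hsplit : ∫ x in S, gaussianPDFReal a ((σ^2).toNNReal) x
      = (∫ x in S ∩ B, gaussianPDFReal a ((σ^2).toNNReal) x)
        + ∫ x in S \ B, gaussianPDFReal a ((σ^2).toNNReal) x :=
    (integral_inter_add_diff hBmeas (integrable_gaussianPDFReal _ _).integrableOn).symm
  have h1 : ∫ x in S ∩ B, gaussianPDFReal a ((σ^2).toNNReal) x
      ≤ ((gaussianReal a ((σ^2).toNNReal)) B).toReal := by
    rw [htoReal]
    refine setIntegral_mono_set (integrable_gaussianPDFReal _ _).integrableOn
      (ae_of_all _ fun x => gaussianPDFReal_nonneg _ _ _) ?_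
    exact HasSubset.Subset.eventuallyLE Set.inter_subset_right
  have h2 : ∫ x in S \ B, gaussianPDFReal a ((σ^2).toNNReal) x
      ≤ Real.exp ε * ∫ x in S, gaussianPDFReal b ((σ^2).toNNReal) x := by
    calc ∫ x in S \ B, gaussianPDFReal a ((σ^2).toNNReal) x
        ≤ ∫ x in S \ B, Real.exp ε * gaussianPDFReal b ((σ^2).toNNReal) x := by
          refine setIntegral_mono_on (integrable_gaussianPDFReal _ _).integrableOn
            ((integrable_gaussianPDFReal _ _).integrableOn.const_mul _)
            (hS.diff hBmeas) fun x hx => ?_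
          exact le_of_not_gt hx.2
      _ ≤ ∫ x in S, Real.exp ε * gaussianPDFReal b ((σ^2).toNNReal) x := by
          refine setIntegral_mono_set
            ((integrable_gaussianPDFReal _ _).integrableOn.const_mul _)
            (ae_of_all _ fun x => mul_nonneg (Real.exp_pos _).le
              (gaussianPDFReal_nonneg _ _ _)) ?_
          exact HasSubset.Subset.eventuallyLE Set.diff_subset
      _ = Real.exp ε * ∫ x in S, gaussianPDFReal b ((σ^2).toNNReal) x :=
          integral_const_mul _ _
  -- bound measure of B by δ
  have hB : ((gaussianReal a ((σ^2).toNNReal)) B).toReal ≤ δ := by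
    rw [gauss_shift _ _ _ hBmeas]
    have hBeq : {x : ℝ | x + a ∈ B} = {t : ℝ | 2*σ^2*ε < d*(2*t + d)} := by
      ext t
      simp only [hBdef, Set.mem_setOf_eq]
      unfold gaussianPDFReal
      rw [hvc]
      rw [mul_comm (Real.exp ε), mul_assoc, mul_lt_mul_iff_right₀ (by positivity),
        ← Real.exp_add, Real.exp_lt_exp]
      have h2σ : (0:ℝ) < 2*σ^2 := by positivity
      have hring : -(t + a - a)^2/(2*σ^2) - (-(t + a - b)^2/(2*σ^2) + ε)
          = (d*(2*t + d) - 2*σ^2*ε)/(2*σ^2) := by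
        simp only [hd]; field_simp; ring
      rw [← sub_pos, hring, lt_div_iff₀ h2σ, zero_mul, sub_pos]
    rw [hBeq]
    by_cases hd0 : d = 0
    · have : {t : ℝ | 2*σ^2*ε < d*(2*t + d)} = ∅ := by
        ext t
        simp only [hd0, Set.mem_setOf_eq, Set.mem_empty_iff_false, iff_false, not_lt,
          zero_mul]
        positivity
      rw [this]
      simp only [measure_empty, ENNReal.toReal_zero]
      linarith
    · have habs : 0 < |d| := abs_pos.mpr hd0
      have habsΔ : |d| ≤ Δ := hab
      set K := σ^2*ε/|d| - |d|/2 with hK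
      have hIoiK : gaussianReal 0 ((σ^2).toNNReal) {t : ℝ | 2*σ^2*ε < d*(2*t + d)}
          = gaussianReal 0 ((σ^2).toNNReal) (Set.Ioi K) := by
        rcases lt_or_gt_of_ne hd0 with hneg | hpos
        · have hset : {t : ℝ | 2*σ^2*ε < d*(2*t + d)} = Set.Iio (-K) := by
            have h2d : (2*d) < 0 := by linarith
            have hKd : (-K) * (2*d) = 2*σ^2*ε - d^2 := by
              simp only [hK, abs_of_neg hneg]
              field_simp
              ring
            ext t
            simp only [Set.mem_setOf_eq, Set.mem_Iio]
            constructor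
            · intro h
              by_contra hcon
              push_neg at hcon
              have hmul := mul_le_mul_of_nonpos_right hcon (le_of_lt h2d)
              nlinarith
            · intro h
              have hmul := mul_lt_mul_of_neg_right h h2d
              nlinarith
          rw [hset, gauss_Iio, neg_neg]
        · have hset : {t : ℝ | 2*σ^2*ε < d*(2*t + d)} = Set.Ioi K := by
            have h2d : (0:ℝ) < 2*d := by linarith
            have hKd : K * (2*d) = 2*σ^2*ε - d^2 := by
              simp only [hK, abs_of_pos hpos]
              field_simp
            ext t
            simp only [Set.mem_setOf_eq, Set.mem_Ioi]
            constructor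
            · intro h
              by_contra hcon
              push_neg at hcon
              have hmul := mul_le_mul_of_nonneg_right hcon (le_of_lt h2d)
              nlinarith
            · intro h
              have hmul := mul_lt_mul_of_pos_right h h2d
              nlinarith
          rw [hset]
      rw [hIoiK]
      have hTK : σ^2*ε/Δ - Δ/2 ≤ K := by
        have e1 : σ^2*ε/Δ ≤ σ^2*ε/|d| :=
          div_le_div_of_nonneg_left (by positivity) habs habsΔ
        simp only [hK]
        linarith
      have hmono := measure_mono (μ := gaussianReal 0 ((σ^2).toNNReal))
        (Set.Ioi_subset_Ioi hTK)
      have hmono' := ENNReal.toReal_mono (measure_ne_top _ _) hmono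
      have htail := tail_le_delta ε δ Δ σ hε0 hε1 hδ0 hδ1 hΔ hσ
      linarith
  rw [hsplit]
  linarith [h1, h2, hB]
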